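/- arXiv:1404.1601 — 3 statements merged into one kernel-verified Lean document; each statement's English description precedes it below -/
import Mathlib

section
/- The faulty min-sum variable node update rule preserves symmetry: for all sign-magnitude words m₀, …, m_{d_v-1} and all error patterns e₀, …, e_{d_v-1} ∈ {0,1}^b, it holds that Φ(val(e₀(-m₀)), val(e₁(-m₁)), …) = -Φ(val(e₀(m₀)), val(e₁(m₁)), …). -/
/-- A `b`-bit sign-magnitude word (`b = k + 1` bits): a sign bit together with
a `k`-bit magnitude string. -/
structure SMWord (k : ℕ) where
  sign : Bool
  mag : Fin k → Bool

/-- The integer encoded by a bit string (standard binary encoding). -/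
def magVal {k : ℕ} (u : Fin k → Bool) : ℤ :=
  ∑ i : Fin k, if u i then 2 ^ (i : ℕ) else 0

/-- The value of a sign-magnitude word: `(-1)^s ·` (integer encoded by the
magnitude bits). -/
def SMWord.val {k : ℕ} (m : SMWord k) : ℤ :=
  (if m.sign then -1 else 1) * magVal m.mag

/-- Negation of a sign-magnitude word: flip the sign bit, keep the magnitude. -/
def SMWord.neg {k : ℕ} (m : SMWord k) : SMWord k :=
  ⟨!m.sign, m.mag⟩

/-- A `b`-bit error pattern `e ∈ {0,1}^b` (`b = k + 1`): one bit aligned with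
the sign bit and `k` bits aligned with the magnitude bits. -/
structure ErrPattern (k : ℕ) where
  sign : Bool
  mag : Fin k → Bool

/-- An error pattern acts on a sign-magnitude word by bitwise XOR. -/
def applyErr {k : ℕ} (e : ErrPattern k) (m : SMWord k) : SMWord k :=
  ⟨xor e.sign m.sign, fun i => xor (e.mag i) (m.mag i)⟩

lemma applyErr_neg_val {k : ℕ} (e : ErrPattern k) (m : SMWord k) :
    (applyErr e m.neg).val = -(applyErr e m).val := by
  simp only [applyErr, SMWord.neg, SMWord.val]
  rcases e with ⟨es, em⟩; rcases m with ⟨ms, mm⟩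
  cases es <;> cases ms <;> simp <;> ring

/-- The faulty min-sum variable node update rule preserves
symmetry: with `Φ(m₀, …, m_{dv-1}) = m₀ + ∑_{j=1}^{dv-1} m_j` (variable node
degree `dv ≥ 1`), for all `b`-bit sign-magnitude words `m₀, …, m_{dv-1}` and
all error patterns `e₀, …, e_{dv-1} ∈ {0,1}^b`,
`Φ(val(e₀(-m₀)), val(e₁(-m₁)), …) = -Φ(val(e₀(m₀)), val(e₁(m₁)), …)`. -/
theorem faulty_var_node_update_odd (b : ℕ) (hb : 1 ≤ b)
    (dv : ℕ) (hdv : 1 ≤ dv)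
    (Φ : (ℕ → ℤ) → ℤ)
    (hΦ : ∀ m : ℕ → ℤ, Φ m = m 0 + ∑ j ∈ Finset.Icc 1 (dv - 1), m j)
    (m : ℕ → SMWord (b - 1)) (e : ℕ → ErrPattern (b - 1)) :
    Φ (fun i => (applyErr (e i) (m i).neg).val)
      = -Φ (fun i => (applyErr (e i) (m i)).val) := by
  rw [hΦ, hΦ]
  simp only [applyErr_neg_val]
  rw [Finset.sum_neg_distrib]
  ring
end

section
/- The faulty min-sum check node update rule preserves symmetry: for all sign-magnitude words m₁, …, m_{d_c-1}, all error patterns e₁, …, e_{d_c-1} ∈ {0,1}^b, and all signs b₁, …, b_{d_c-1} ∈ {+1, -1}, it holds that Ψ(val(e₁(b₁·m₁)), …, val(e_{d_c-1}(b_{d_c-1}·m_{d_c-1}))) = (∏_{i=1}^{d_c-1} b_i) · Ψ(val(e₁(m₁)), …, val(e_{d_c-1}(m_{d_c-1}))), where bᵢ·mᵢ denotes mᵢ if bᵢ = +1 and the negation of mᵢ if bᵢ = -1. -/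
/-- The action `bᵢ · mᵢ` of a sign `bᵢ ∈ {+1, -1}` on a sign-magnitude word:
`mᵢ` if `bᵢ = +1` and the negation of `mᵢ` if `bᵢ = -1`. -/
def signAct {k : ℕ} (s : ℤ) (m : SMWord k) : SMWord k :=
  if s = 1 then m else m.neg

lemma applyErr_signAct_val {k : ℕ} (e : ErrPattern k) (m : SMWord k) (s : ℤ)
    (hs : s = 1 ∨ s = -1) :
    (applyErr e (signAct s m)).val = s * (applyErr e m).val := by
  rcases hs with h | h <;> subst h
  · simp [signAct]
  · simp only [signAct, if_neg (by norm_num : (-1:ℤ) ≠ 1), SMWord.neg, applyErr, SMWord.val]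
    rw [show (xor e.sign !m.sign) = !(xor e.sign m.sign) by cases e.sign <;> cases m.sign <;> rfl]
    rcases Bool.dichotomy (xor e.sign m.sign) with h | h <;> simp only [h] <;> simp <;> ring

/-- The faulty min-sum check node update rule preserves
symmetry: with `Ψ(m₁, …, m_{dc-1}) = (∏ᵢ sign(mᵢ)) · minᵢ |mᵢ|` (check node
degree `dc ≥ 2`, `sign 0 = 0`), for all `b`-bit sign-magnitude words `mᵢ`,
all error patterns `eᵢ ∈ {0,1}^b`, and all signs `bᵢ ∈ {+1, -1}`,
`Ψ(val(e₁(b₁·m₁)), …) = (∏ᵢ bᵢ) · Ψ(val(e₁(m₁)), …)`. -/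
theorem faulty_check_node_update_sign_symmetry (b : ℕ) (hb : 1 ≤ b)
    (dc : ℕ) (hdc : 2 ≤ dc)
    (Ψ : (Fin (dc - 1) → ℤ) → ℤ)
    (hΨ : ∀ m : Fin (dc - 1) → ℤ,
      Ψ m = (∏ i, Int.sign (m i)) *
        Finset.univ.inf' ⟨⟨0, by omega⟩, Finset.mem_univ _⟩ (fun i => |m i|))
    (m : Fin (dc - 1) → SMWord (b - 1)) (e : Fin (dc - 1) → ErrPattern (b - 1))
    (s : Fin (dc - 1) → ℤ) (hs : ∀ i, s i = 1 ∨ s i = -1) :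
    Ψ (fun i => (applyErr (e i) (signAct (s i) (m i))).val)
      = (∏ i, s i) * Ψ (fun i => (applyErr (e i) (m i)).val) := by
  have hval : ∀ i, (applyErr (e i) (signAct (s i) (m i))).val
      = s i * (applyErr (e i) (m i)).val :=
    fun i => applyErr_signAct_val _ _ _ (hs i)
  rw [hΨ, hΨ]
  simp only [hval]
  have hsign : ∀ i, Int.sign (s i * (applyErr (e i) (m i)).val)
      = s i * Int.sign ((applyErr (e i) (m i)).val) := by
    intro i
    rcases hs i with h | h <;> rw [h] <;> simp [Int.sign_neg]
  have habs : ∀ i, |s i * (applyErr (e i) (m i)).val|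
      = |(applyErr (e i) (m i)).val| := by
    intro i
    rcases hs i with h | h <;> rw [h] <;> simp
  simp only [hsign, habs]
  rw [Finset.prod_mul_distrib]
  ring
end

section
/- Density evolution identity for the check node update, positive values: let X₁, …, Xₙ be independent and identically distributed integer-valued random variables and let m ≥ 1 be an integer. Then the probability that the min-sum check node output (∏_{i=1}^n sign(X_i)) · min_{i} |X_i| is at least m equals Σ_{k even, 0 ≤ k ≤ n} C(n, k) · P(X₁ ≤ -m)^k · P(X₁ ≥ m)^{n-k}. -/
open MeasureTheory ProbabilityTheory ENNReal

lemma de_key (n : ℕ) (hn : 0 < n) (x : Fin n → ℤ) (m : ℤ) (hm : 1 ≤ m) :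
    m ≤ (∏ i, Int.sign (x i)) *
        Finset.univ.inf' ⟨⟨0, hn⟩, Finset.mem_univ _⟩ (fun i => |x i|) ↔
    ∃ S : Finset (Fin n), Even S.card ∧
      ∀ i, (i ∈ S → x i ≤ -m) ∧ (i ∉ S → m ≤ x i) := by
  set I := Finset.univ.inf' ⟨⟨0, hn⟩, Finset.mem_univ _⟩ (fun i => |x i|) with hI
  have hI0 : 0 ≤ I := Finset.le_inf' _ _ (fun i _ => abs_nonneg _)
  constructor
  · intro h
    have hne : ∀ i, x i ≠ 0 := by
      intro i hxi
      have : (∏ i, Int.sign (x i)) = 0 :=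
        Finset.prod_eq_zero (Finset.mem_univ i) (by simp [hxi])
      rw [this, zero_mul] at h
      omega
    have hunit : IsUnit (∏ i, Int.sign (x i)) := by
      apply Finset.prod_induction _ IsUnit (fun a b => IsUnit.mul) isUnit_one
      intro i _
      rcases lt_or_gt_of_ne (hne i) with h1 | h1
      · simp [Int.sign_eq_neg_one_of_neg h1]
      · simp [Int.sign_eq_one_of_pos h1]
    have hP : (∏ i, Int.sign (x i)) = 1 ∨ (∏ i, Int.sign (x i)) = -1 :=
      Int.isUnit_iff.mp hunit
    have hP1 : (∏ i, Int.sign (x i)) = 1 := by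
      rcases hP with h1 | h1
      · exact h1
      · rw [h1] at h; omega
    rw [hP1, one_mul] at h
    refine ⟨Finset.univ.filter (fun i => x i < 0), ?_, ?_⟩
    · have hprod : (∏ i, Int.sign (x i)) =
          (-1 : ℤ) ^ (Finset.univ.filter (fun i => x i < 0)).card := by
        rw [← Finset.prod_const, ← Finset.prod_filter_mul_prod_filter_not
          Finset.univ (fun i => x i < 0) (fun i => Int.sign (x i))]
        have h2 : ∏ i ∈ Finset.univ.filter (fun i => ¬ x i < 0), Int.sign (x i) = 1 := by
          apply Finset.prod_eq_one
          intro i hi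
          simp only [Finset.mem_filter] at hi
          have : 0 < x i := lt_of_le_of_ne (not_lt.mp hi.2) (Ne.symm (hne i))
          exact Int.sign_eq_one_of_pos this
        rw [h2, mul_one]
        apply Finset.prod_congr rfl
        intro i hi
        simp only [Finset.mem_filter] at hi
        exact Int.sign_eq_neg_one_of_neg hi.2
      rw [hprod] at hP1
      exact (neg_one_pow_eq_one_iff_even (by norm_num)).mp hP1
    · intro i
      have habs : m ≤ |x i| := h.trans (Finset.inf'_le _ (Finset.mem_univ i))
      constructor
      · intro hi
        simp only [Finset.mem_filter] at hi
        rw [abs_of_neg hi.2] at habs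
        omega
      · intro hi
        simp only [Finset.mem_filter, Finset.mem_univ, true_and, not_lt] at hi
        rwa [abs_of_nonneg hi] at habs
  · rintro ⟨S, hS, hx⟩
    have habs : ∀ i, m ≤ |x i| := by
      intro i
      by_cases hi : i ∈ S
      · have := (hx i).1 hi
        rw [abs_of_neg (by omega)]; omega
      · have := (hx i).2 hi
        rw [abs_of_pos (by omega)]; omega
    have hImI : m ≤ I := Finset.le_inf' _ _ (fun i _ => habs i)
    have hP1 : (∏ i, Int.sign (x i)) = 1 := by
      have : (∏ i, Int.sign (x i)) = (-1 : ℤ) ^ S.card := by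
        rw [← Finset.prod_const, ← Finset.prod_filter_mul_prod_filter_not
          Finset.univ (fun i => i ∈ S) (fun i => Int.sign (x i))]
        have hfS : Finset.univ.filter (fun i => i ∈ S) = S := by
          ext i; simp
        rw [hfS]
        have h2 : ∏ i ∈ Finset.univ.filter (fun i => ¬ i ∈ S), Int.sign (x i) = 1 := by
          apply Finset.prod_eq_one
          intro i hi
          simp only [Finset.mem_filter] at hi
          exact Int.sign_eq_one_of_pos (by have := (hx i).2 hi.2; omega)
        rw [h2, mul_one]
        apply Finset.prod_congr rfl
        intro i hi
        exact Int.sign_eq_neg_one_of_neg (by have := (hx i).1 hi; omega)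
      rw [this, hS.neg_one_pow]
    rw [hP1, one_mul]
    exact hImI
/-- Density evolution identity for the min-sum check node
update, positive values: let `X₁, …, Xₙ` be i.i.d. integer-valued random
variables and let `m ≥ 1` be an integer. Then the probability that the
min-sum check node output `(∏ᵢ sign(Xᵢ)) · minᵢ |Xᵢ|` is at least `m` equals
`∑_{k even, 0 ≤ k ≤ n} C(n,k) · P(X₁ ≤ -m)^k · P(X₁ ≥ m)^{n-k}`. -/
theorem de_check_node_pos {Ω : Type*} [MeasurableSpace Ω]
    (μ : Measure Ω) [IsProbabilityMeasure μ]
    (n : ℕ) (hn : 0 < n) (X : Fin n → Ω → ℤ)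
    (hmeas : ∀ i, Measurable (X i))
    (hindep : iIndepFun X μ)
    (hident : ∀ i, IdentDistrib (X i) (X ⟨0, hn⟩) μ μ)
    (m : ℤ) (hm : 1 ≤ m) :
    μ {ω | m ≤ (∏ i, Int.sign (X i ω)) *
        Finset.univ.inf' ⟨⟨0, hn⟩, Finset.mem_univ _⟩ (fun i => |X i ω|)}
      = ∑ k ∈ (Finset.range (n + 1)).filter (fun k => Even k),
          (n.choose k : ℝ≥0∞) * μ {ω | X ⟨0, hn⟩ ω ≤ -m} ^ k *
            μ {ω | m ≤ X ⟨0, hn⟩ ω} ^ (n - k) := by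
  classical
  set p := μ {ω | X ⟨0, hn⟩ ω ≤ -m} with hp
  set q := μ {ω | m ≤ X ⟨0, hn⟩ ω} with hq
  set B : Finset (Fin n) → Fin n → Set Ω :=
    fun S i => if i ∈ S then X i ⁻¹' Set.Iic (-m) else X i ⁻¹' Set.Ici m with hB
  have hBmeas : ∀ S i, MeasurableSet (B S i) := by
    intro S i
    by_cases h : i ∈ S
    · simpa only [hB, h, if_true] using (hmeas i) measurableSet_Iic
    · simpa only [hB, h, if_false] using (hmeas i) measurableSet_Ici
  set 𝒮 : Finset (Finset (Fin n)) :=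
    Finset.univ.powerset.filter (fun S => Even S.card) with h𝒮
  have hunion : {ω | m ≤ (∏ i, Int.sign (X i ω)) *
        Finset.univ.inf' ⟨⟨0, hn⟩, Finset.mem_univ _⟩ (fun i => |X i ω|)}
      = ⋃ S ∈ 𝒮, ⋂ i, B S i := by
    ext ω
    simp only [Set.mem_setOf_eq, Set.mem_iUnion, Set.mem_iInter, h𝒮,
      Finset.mem_filter, Finset.mem_powerset]
    rw [de_key n hn (fun i => X i ω) m hm]
    constructor
    · rintro ⟨S, hS, h⟩
      refine ⟨S, ⟨Finset.subset_univ _, hS⟩, fun i => ?_⟩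
      by_cases hi : i ∈ S
      · simpa only [hB, hi, if_true, Set.mem_preimage, Set.mem_Iic] using (h i).1 hi
      · simpa only [hB, hi, if_false, Set.mem_preimage, Set.mem_Ici] using (h i).2 hi
    · rintro ⟨S, ⟨-, hS⟩, h⟩
      refine ⟨S, hS, fun i => ⟨fun hi => ?_, fun hi => ?_⟩⟩
      · have := h i; simpa only [hB, hi, if_true, Set.mem_preimage, Set.mem_Iic] using this
      · have := h i; simpa only [hB, hi, if_false, Set.mem_preimage, Set.mem_Ici] using this
  rw [hunion]
  rw [measure_biUnion_finset ?hd (fun S _ => MeasurableSet.iInter (fun i => hBmeas S i))]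
  case hd =>
    intro S hS T hT hST
    rw [Function.onFun, Set.disjoint_left]
    intro ω hωS hωT
    apply hST
    simp only [Set.mem_iInter] at hωS hωT
    ext i
    constructor
    · intro hiS
      by_contra hiT
      have h1 := hωS i
      have h2 := hωT i
      simp only [hB, hiS, hiT, if_true, if_false, Set.mem_preimage,
        Set.mem_Iic, Set.mem_Ici] at h1 h2
      omega
    · intro hiT
      by_contra hiS
      have h1 := hωS i
      have h2 := hωT i
      simp only [hB, hiS, hiT, if_true, if_false, Set.mem_preimage,
        Set.mem_Iic, Set.mem_Ici] at h1 h2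
      omega
  have hterm : ∀ S : Finset (Fin n),
      μ (⋂ i, B S i) = p ^ S.card * q ^ (n - S.card) := by
    intro S
    have h1 : μ (⋂ i, B S i) = ∏ i, μ (B S i) := by
      apply hindep.meas_iInter
      intro i
      by_cases h : i ∈ S
      · exact ⟨Set.Iic (-m), measurableSet_Iic, by simp [hB, h]⟩
      · exact ⟨Set.Ici m, measurableSet_Ici, by simp [hB, h]⟩
    have h2 : ∀ i, μ (B S i) = if i ∈ S then p else q := by
      intro i
      by_cases h : i ∈ S
      · simp only [hB, h, if_true]
        have := (hident i).measure_mem_eq (measurableSet_Iic (a := -m))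
        simpa [Set.preimage, Set.Iic] using this
      · simp only [hB, h, if_false]
        have := (hident i).measure_mem_eq (measurableSet_Ici (a := m))
        simpa [Set.preimage, Set.Ici] using this
    rw [h1, Finset.prod_congr rfl (fun i _ => h2 i), Finset.prod_ite,
      Finset.prod_const, Finset.prod_const]
    have hfS : Finset.univ.filter (fun i => i ∈ S) = S := by ext i; simp
    have hfSc : Finset.univ.filter (fun i => ¬ i ∈ S) = Sᶜ := by
      ext i; simp
    rw [hfS, hfSc, Finset.card_compl, Fintype.card_fin]
  rw [Finset.sum_congr rfl (fun S _ => hterm S)]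
  have hsplit : 𝒮 = ((Finset.range (n + 1)).filter (fun k => Even k)).biUnion
      (fun k => Finset.powersetCard k Finset.univ) := by
    ext S
    simp only [h𝒮, Finset.mem_filter, Finset.mem_powerset, Finset.mem_biUnion,
      Finset.mem_range, Finset.mem_powersetCard]
    constructor
    · rintro ⟨hsub, hev⟩
      exact ⟨S.card, ⟨Nat.lt_succ_of_le (by simpa using Finset.card_le_univ S), hev⟩,
        hsub, rfl⟩
    · rintro ⟨k, ⟨-, hev⟩, hsub, rfl⟩
      exact ⟨hsub, hev⟩
  rw [hsplit, Finset.sum_biUnion]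
  · apply Finset.sum_congr rfl
    intro k hk
    rw [Finset.sum_congr rfl (fun S hS => by
      rw [(Finset.mem_powersetCard.mp hS).2]), Finset.sum_const,
      Finset.card_powersetCard, Finset.card_univ, Fintype.card_fin,
      nsmul_eq_mul, mul_assoc]
  · intro a ha b hb hab
    rw [Function.onFun, Finset.disjoint_left]
    intro S hSa hSb
    exact hab ((Finset.mem_powersetCard.mp hSa).2 ▸ (Finset.mem_powersetCard.mp hSb).2.symm ▸ rfl)
end
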